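/- Let (Ω, Σ, P) be a probability space, let k and n be positive integers, let X₁, …, Xₙ : Ω → (0,∞) be independent, identically distributed positive random variables with common mean m = E[X₁] ∈ (0,∞), and let X̄ = (1/n)·∑_{i=1}^{n} Xᵢ denote the sample mean. Assume log(X̄), X̄^j, and X̄^{−j} are integrable for 1 ≤ j ≤ 2k−1. Then E[ ∑_{j=1}^{2k−1} ( 1/j + b_{k,j} · X̄^j / m^j ) + log(X̄) ] ≤ log(m) ≤ E[ −∑_{j=1}^{2k−1} ( 1/j + b_{k,j} · m^j / X̄^j ) + log(X̄) ]. -/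

import Mathlib

open MeasureTheory ProbabilityTheory Finset

section Aux


-- value at t = 1 : ∑_{j=1}^N (-1)^j C(N,j)/j = -∑ 1/j
lemma sum_A (N : ℕ) :
    ∑ j ∈ Icc 1 N, ((-1 : ℝ) ^ j / (j : ℝ)) * (N.choose j : ℝ)
      = -∑ j ∈ Icc 1 N, (1 / (j : ℝ)) := by
  induction N with
  | zero => simp
  | succ N ih =>
    have halt : ∑ j ∈ Icc 1 (N + 1), ((-1 : ℝ) ^ j) * ((N + 1).choose j : ℝ) = -1 := by
      have h := Int.alternating_sum_range_choose (n := N + 1)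
      rw [if_neg (Nat.succ_ne_zero N)] at h
      have h' : ((∑ i ∈ range (N + 2), (-1 : ℤ) ^ i * ((N + 1).choose i : ℤ) : ℤ) : ℝ) = 0 := by
        rw [h]; norm_num
      push_cast at h'
      rw [Finset.range_eq_Ico, Finset.sum_eq_sum_Ico_succ_bot (by omega : 0 < N + 2)] at h'
      rw [show N + 2 = N + 1 + 1 from rfl, Finset.Ico_add_one_right_eq_Icc] at h'
      simp at h'
      linarith [h']
    have hpascal : ∀ j ∈ Icc 1 (N + 1),
        ((-1 : ℝ) ^ j / (j : ℝ)) * ((N + 1).choose j : ℝ)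
          = ((-1 : ℝ) ^ j / (j : ℝ)) * (N.choose j : ℝ)
            + ((-1 : ℝ) ^ j) * ((N + 1).choose j : ℝ) / ((N : ℝ) + 1) := by
      intro j hj
      obtain ⟨hj1, hj2⟩ := Finset.mem_Icc.mp hj
      obtain ⟨i, rfl⟩ : ∃ i, j = i + 1 := ⟨j - 1, by omega⟩
      have hkey : ((N : ℝ) + 1) * (N.choose i : ℝ) = ((N + 1).choose (i + 1) : ℝ) * ((i : ℝ) + 1) := by
        have := Nat.add_one_mul_choose_eq N i
        exact_mod_cast congrArg (Nat.cast : ℕ → ℝ) this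
      have hpas : ((N + 1).choose (i + 1) : ℝ) = (N.choose (i + 1) : ℝ) + (N.choose i : ℝ) := by
        rw [Nat.choose_succ_succ']; push_cast; ring
      have hi1 : ((i : ℝ) + 1) ≠ 0 := by positivity
      have hN1 : ((N : ℝ) + 1) ≠ 0 := by positivity
      have hkey' : ((N : ℝ) + 1) * (N.choose i : ℝ)
          = ((N.choose (i + 1) : ℝ) + (N.choose i : ℝ)) * ((i : ℝ) + 1) := by
        rw [hpas] at hkey; exact hkey
      rw [hpas]
      push_cast
      field_simp
      linear_combination (1) * hkey'
    rw [Finset.sum_congr rfl hpascal, Finset.sum_add_distrib]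
    have h1 : ∑ j ∈ Icc 1 (N + 1), ((-1 : ℝ) ^ j / (j : ℝ)) * (N.choose j : ℝ)
        = ∑ j ∈ Icc 1 N, ((-1 : ℝ) ^ j / (j : ℝ)) * (N.choose j : ℝ) := by
      rw [← Finset.Ico_add_one_right_eq_Icc, Finset.sum_Ico_succ_top (by omega : 1 ≤ N + 1),
        Finset.Ico_add_one_right_eq_Icc]
      simp [Nat.choose_succ_self]
    have h2 : ∑ j ∈ Icc 1 (N + 1), ((-1 : ℝ) ^ j) * ((N + 1).choose j : ℝ) / ((N : ℝ) + 1)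
        = -1 / ((N : ℝ) + 1) := by
      rw [← Finset.sum_div, halt]
    rw [h1, h2, ih]
    rw [← Finset.Ico_add_one_right_eq_Icc (a := 1) (b := N + 1), Finset.sum_Ico_succ_top (by omega : 1 ≤ N + 1),
      Finset.Ico_add_one_right_eq_Icc]
    push_cast
    ring

-- key pointwise inequality
lemma key_ineq (N : ℕ) (hN : Odd N) {t : ℝ} (ht : 0 < t) :
    (∑ j ∈ Icc 1 N, (1 / (j : ℝ) + ((-1 : ℝ) ^ j / (j : ℝ)) * (N.choose j : ℝ) * t ^ j))
      + Real.log t ≤ 0 := by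
  set F : ℝ → ℝ := fun t =>
    (∑ j ∈ Icc 1 N, (1 / (j : ℝ) + ((-1 : ℝ) ^ j / (j : ℝ)) * (N.choose j : ℝ) * t ^ j))
      + Real.log t with hF
  have hF1 : F 1 = 0 := by
    simp only [hF, one_pow, mul_one, Real.log_one, add_zero]
    rw [Finset.sum_add_distrib, sum_A]
    ring
  have hderiv : ∀ x : ℝ, 0 < x → HasDerivAt F ((1 - x) ^ N / x) x := by
    intro x hx
    have hsum : HasDerivAt
        (fun t : ℝ => ∑ j ∈ Icc 1 N, (1 / (j : ℝ) + ((-1 : ℝ) ^ j / (j : ℝ)) * (N.choose j : ℝ) * t ^ j))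
        (∑ j ∈ Icc 1 N, ((-1 : ℝ) ^ j / (j : ℝ)) * (N.choose j : ℝ) * ((j : ℝ) * x ^ (j - 1))) x := by
      apply HasDerivAt.fun_sum
      intro j hj
      exact ((hasDerivAt_pow j x).const_mul
        (((-1 : ℝ) ^ j / (j : ℝ)) * (N.choose j : ℝ))).const_add (1 / (j : ℝ))
    have hlog := Real.hasDerivAt_log hx.ne'
    have h := hsum.add hlog
    convert h using 1
    case e'_4 | e'_5 | e'_8 => rfl
    -- show (1 - x)^N / x = ∑ ... + x⁻¹
    have hbin : ∑ j ∈ Icc 1 N, ((-1 : ℝ) ^ j) * (N.choose j : ℝ) * x ^ j = (1 - x) ^ N - 1 := by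
      have h := add_pow (-x) 1 N
      have : ((-x) + 1) ^ N = ∑ j ∈ range (N + 1), (-x) ^ j * (N.choose j : ℝ) := by
        rw [h]; apply Finset.sum_congr rfl; intro j hj; rw [one_pow, mul_one]
      rw [Finset.range_eq_Ico, Finset.sum_eq_sum_Ico_succ_bot (by omega : 0 < N + 1),
        Finset.Ico_add_one_right_eq_Icc] at this
      simp only [pow_zero, mul_one, Nat.choose_zero_right, Nat.cast_one, one_mul] at this
      have heq : ∀ j ∈ Icc 1 N, (-x) ^ j * (N.choose j : ℝ)
          = ((-1 : ℝ) ^ j) * (N.choose j : ℝ) * x ^ j := by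
        intro j hj; rw [neg_pow]; ring
      rw [Finset.sum_congr rfl heq] at this
      have : (1 - x) ^ N = 1 + ∑ j ∈ Icc 1 N, ((-1 : ℝ) ^ j) * (N.choose j : ℝ) * x ^ j := by
        rw [← this]; ring_nf
      linarith [this]
    have hterm : ∀ j ∈ Icc 1 N,
        ((-1 : ℝ) ^ j / (j : ℝ)) * (N.choose j : ℝ) * ((j : ℝ) * x ^ (j - 1))
          = ((-1 : ℝ) ^ j) * (N.choose j : ℝ) * x ^ j / x := by
      intro j hj
      obtain ⟨hj1, _⟩ := Finset.mem_Icc.mp hj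
      have hjne : (j : ℝ) ≠ 0 := by positivity
      have hxp : x ^ j = x ^ (j - 1) * x := by
        rw [← pow_succ]; congr 1; omega
      rw [hxp]
      field_simp
    rw [Finset.sum_congr rfl hterm, ← Finset.sum_div, hbin]
    field_simp
    ring
  rcases le_total t 1 with hle | hge
  · have hmono : MonotoneOn F (Set.Icc t 1) := by
      apply monotoneOn_of_deriv_nonneg (convex_Icc t 1)
      · intro x hx
        exact ((hderiv x (lt_of_lt_of_le ht hx.1)).differentiableAt).continuousAt.continuousWithinAt
      · intro x hx
        rw [interior_Icc] at hx
        exact ((hderiv x (lt_trans ht hx.1)).differentiableAt).differentiableWithinAt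
      · intro x hx
        rw [interior_Icc] at hx
        have hx0 : 0 < x := lt_trans ht hx.1
        rw [(hderiv x hx0).deriv]
        apply div_nonneg _ hx0.le
        exact pow_nonneg (by linarith [hx.2]) N
    have := hmono (Set.mem_Icc.mpr ⟨le_refl t, hle⟩) (Set.mem_Icc.mpr ⟨hle, le_refl 1⟩) hle
    calc F t ≤ F 1 := this
      _ = 0 := hF1
  · have hanti : AntitoneOn F (Set.Icc 1 t) := by
      apply antitoneOn_of_deriv_nonpos (convex_Icc 1 t)
      · intro x hx
        exact ((hderiv x (lt_of_lt_of_le one_pos hx.1)).differentiableAt).continuousAt.continuousWithinAt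
      · intro x hx
        rw [interior_Icc] at hx
        exact ((hderiv x (lt_trans one_pos hx.1)).differentiableAt).differentiableWithinAt
      · intro x hx
        rw [interior_Icc] at hx
        have hx0 : (0 : ℝ) < x := lt_trans one_pos hx.1
        rw [(hderiv x hx0).deriv]
        apply div_nonpos_of_nonpos_of_nonneg _ hx0.le
        exact hN.pow_nonpos (by linarith [hx.1])
    have := hanti (Set.mem_Icc.mpr ⟨le_refl 1, hge⟩) (Set.mem_Icc.mpr ⟨hge, le_refl t⟩) hge
    calc F t ≤ F 1 := this
      _ = 0 := hF1

end Aux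

/-- Let `k, n ≥ 1`, let `X₁, …, Xₙ : Ω → (0,∞)` be i.i.d. positive random
variables with common mean `m = E[X₁] ∈ (0,∞)`, and let `X̄ = (1/n)·∑ᵢ Xᵢ` be the sample
mean. Assume `log(X̄)`, `X̄^j`, `X̄^{−j}` are integrable for `1 ≤ j ≤ 2k−1`. Then, with
`b_{k,j} = ((−1)^j/j)·C(2k−1,j)`,
`E[∑_{j=1}^{2k−1} (1/j + b_{k,j}·X̄^j/m^j) + log(X̄)] ≤ log(m)
  ≤ E[−∑_{j=1}^{2k−1} (1/j + b_{k,j}·m^j/X̄^j) + log(X̄)]`. -/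
theorem log_mean_sample_mean_bounds
    {Ω : Type*} [MeasurableSpace Ω] (P : Measure Ω) [IsProbabilityMeasure P]
    (k n : ℕ) (hk : 0 < k) (hn : 0 < n)
    (X : Fin n → Ω → ℝ)
    (hmeas : ∀ i, Measurable (X i))
    (hpos : ∀ i ω, 0 < X i ω)
    (hindep : iIndepFun X P)
    (hident : ∀ i, IdentDistrib (X i) (X ⟨0, hn⟩) P P)
    (hX0int : Integrable (X ⟨0, hn⟩) P)
    (m : ℝ) (hm : m = ∫ ω, X ⟨0, hn⟩ ω ∂P) (hmpos : 0 < m)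
    (Xbar : Ω → ℝ) (hXbar : ∀ ω, Xbar ω = (∑ i, X i ω) / (n : ℝ))
    (hlogint : Integrable (fun ω => Real.log (Xbar ω)) P)
    (hpow : ∀ j ∈ Finset.Icc 1 (2 * k - 1), Integrable (fun ω => Xbar ω ^ j) P)
    (hpowneg : ∀ j ∈ Finset.Icc 1 (2 * k - 1),
      Integrable (fun ω => Xbar ω ^ (-(j : ℤ))) P) :
    (∫ ω, (∑ j ∈ Finset.Icc 1 (2 * k - 1),
          (1 / (j : ℝ) + ((-1 : ℝ) ^ j / (j : ℝ)) * ((2 * k - 1).choose j : ℝ) *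
            (Xbar ω ^ j / m ^ j))) + Real.log (Xbar ω) ∂P
      ≤ Real.log m) ∧
    (Real.log m
      ≤ ∫ ω, (-∑ j ∈ Finset.Icc 1 (2 * k - 1),
          (1 / (j : ℝ) + ((-1 : ℝ) ^ j / (j : ℝ)) * ((2 * k - 1).choose j : ℝ) *
            (m ^ j / Xbar ω ^ j))) + Real.log (Xbar ω) ∂P) := by
  set N := 2 * k - 1 with hN
  have hNodd : Odd N := ⟨k - 1, by omega⟩
  have hxpos : ∀ ω, 0 < Xbar ω := by
    intro ω
    rw [hXbar]
    exact div_pos (Finset.sum_pos (fun i _ => hpos i ω) ⟨⟨0, hn⟩, Finset.mem_univ _⟩)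
      (by exact_mod_cast hn)
  -- pointwise bound 1
  have hpt1 : ∀ ω,
      (∑ j ∈ Icc 1 N, (1 / (j : ℝ) + ((-1 : ℝ) ^ j / (j : ℝ)) * (N.choose j : ℝ) *
        (Xbar ω ^ j / m ^ j))) + Real.log (Xbar ω) ≤ Real.log m := by
    intro ω
    have ht : 0 < Xbar ω / m := div_pos (hxpos ω) hmpos
    have hkey := key_ineq N hNodd ht
    have hrw : ∀ j ∈ Icc 1 N,
        (1 / (j : ℝ) + ((-1 : ℝ) ^ j / (j : ℝ)) * (N.choose j : ℝ) * (Xbar ω ^ j / m ^ j))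
          = (1 / (j : ℝ) + ((-1 : ℝ) ^ j / (j : ℝ)) * (N.choose j : ℝ) * (Xbar ω / m) ^ j) := by
      intro j _; rw [div_pow]
    rw [Finset.sum_congr rfl hrw]
    rw [Real.log_div (hxpos ω).ne' hmpos.ne'] at hkey
    linarith
  -- pointwise bound 2
  have hpt2 : ∀ ω, Real.log m ≤
      (-∑ j ∈ Icc 1 N, (1 / (j : ℝ) + ((-1 : ℝ) ^ j / (j : ℝ)) * (N.choose j : ℝ) *
        (m ^ j / Xbar ω ^ j))) + Real.log (Xbar ω) := by
    intro ω
    have ht : 0 < m / Xbar ω := div_pos hmpos (hxpos ω)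
    have hkey := key_ineq N hNodd ht
    have hrw : ∀ j ∈ Icc 1 N,
        (1 / (j : ℝ) + ((-1 : ℝ) ^ j / (j : ℝ)) * (N.choose j : ℝ) * (m ^ j / Xbar ω ^ j))
          = (1 / (j : ℝ) + ((-1 : ℝ) ^ j / (j : ℝ)) * (N.choose j : ℝ) * (m / Xbar ω) ^ j) := by
      intro j _; rw [div_pow]
    rw [Finset.sum_congr rfl hrw]
    rw [Real.log_div hmpos.ne' (hxpos ω).ne'] at hkey
    linarith
  -- integrability
  have hint1 : Integrable (fun ω =>
      (∑ j ∈ Icc 1 N, (1 / (j : ℝ) + ((-1 : ℝ) ^ j / (j : ℝ)) * (N.choose j : ℝ) *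
        (Xbar ω ^ j / m ^ j))) + Real.log (Xbar ω)) P := by
    apply Integrable.add _ hlogint
    apply integrable_finset_sum
    intro j hj
    exact (integrable_const (1 / (j : ℝ))).add
      (((hpow j hj).div_const (m ^ j)).const_mul (((-1 : ℝ) ^ j / (j : ℝ)) * (N.choose j : ℝ)))
  have hint2 : Integrable (fun ω =>
      (-∑ j ∈ Icc 1 N, (1 / (j : ℝ) + ((-1 : ℝ) ^ j / (j : ℝ)) * (N.choose j : ℝ) *
        (m ^ j / Xbar ω ^ j))) + Real.log (Xbar ω)) P := by
    apply Integrable.add _ hlogint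
    apply Integrable.neg
    apply integrable_finset_sum
    intro j hj
    have hinv : Integrable (fun ω => m ^ j / Xbar ω ^ j) P := by
      have : (fun ω => m ^ j / Xbar ω ^ j) = fun ω => m ^ j * Xbar ω ^ (-(j : ℤ)) := by
        funext ω
        rw [zpow_neg, zpow_natCast, div_eq_mul_inv]
      rw [this]
      exact (hpowneg j hj).const_mul (m ^ j)
    exact (integrable_const (1 / (j : ℝ))).add
      (hinv.const_mul (((-1 : ℝ) ^ j / (j : ℝ)) * (N.choose j : ℝ)))
  constructor
  · calc ∫ ω, (∑ j ∈ Icc 1 N, (1 / (j : ℝ) + ((-1 : ℝ) ^ j / (j : ℝ)) * (N.choose j : ℝ) *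
          (Xbar ω ^ j / m ^ j))) + Real.log (Xbar ω) ∂P
        ≤ ∫ _ω, Real.log m ∂P := integral_mono hint1 (integrable_const _) hpt1
      _ = Real.log m := by simp
  · calc Real.log m = ∫ _ω, Real.log m ∂P := by simp
      _ ≤ _ := integral_mono (integrable_const _) hint2 hpt2
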